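/- The complete n/3-partite graph with all parts of size 3 (the complement of a disjoint union of n/3 triangles) on n vertices is (n-2)-closed, is not (n-3)-closed for n ≥ 3, and has exactly 3^{n/3} maximal cliques. -/

import Mathlib

open SimpleGraph

/-- A graph is `c`-closed if every pair of distinct non-adjacent vertices has
fewer than `c` common neighbors. -/
def IsCClosed {V : Type*} (G : SimpleGraph V) (c : ℕ) : Prop :=
  ∀ u v : V, u ≠ v → ¬G.Adj u v → (G.commonNeighbors u v).ncard < c

/-- `K` is a maximal clique of `G`. -/
def IsMaxClique {V : Type*} (G : SimpleGraph V) (K : Finset V) : Prop :=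
  G.IsClique ↑K ∧ ∀ t : Finset V, G.IsClique ↑t → K ⊆ t → K = t

/-- The complete multipartite graph with `m` parts of size 3: two vertices are
adjacent iff they lie in different parts. -/
def completeMultipartite3 (m : ℕ) : SimpleGraph (Fin m × Fin 3) where
  Adj a b := a.1 ≠ b.1
  symm := ⟨fun _ _ h => Ne.symm h⟩
  loopless := ⟨fun _ h => h rfl⟩

lemma cn_card (m : ℕ) (u v : Fin m × Fin 3) (h1 : u.1 = v.1) :
    ((completeMultipartite3 m).commonNeighbors u v).ncard = 3 * m - 3 := by
  have hset : (completeMultipartite3 m).commonNeighbors u v = {w | w.1 ≠ u.1} := by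
    ext w
    simp [SimpleGraph.commonNeighbors, SimpleGraph.mem_neighborSet,
      completeMultipartite3, ← h1]
    tauto
  rw [hset, Set.ncard_eq_toFinset_card']
  have h2 : {w : Fin m × Fin 3 | w.1 ≠ u.1}.toFinset
      = Finset.univ \ (({u.1} : Finset (Fin m)) ×ˢ Finset.univ) := by
    ext w
    simp only [Set.mem_toFinset, Set.mem_setOf_eq, Finset.mem_sdiff, Finset.mem_univ,
      Finset.mem_product, Finset.mem_singleton, true_and, not_and, ne_eq]
    simp
  rw [h2, Finset.card_sdiff_of_subset (Finset.subset_univ _)]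
  simp [Finset.card_univ, mul_comm]

def transClique (m : ℕ) (f : Fin m → Fin 3) : Finset (Fin m × Fin 3) :=
  Finset.univ.image fun i => (i, f i)

lemma transClique_isMaxClique (m : ℕ) (f : Fin m → Fin 3) :
    IsMaxClique (completeMultipartite3 m) (transClique m f) := by
  constructor
  · intro a ha b hb hab
    simp only [transClique, Finset.coe_image, Finset.coe_univ, Set.image_univ,
      Set.mem_range] at ha hb
    obtain ⟨i, rfl⟩ := ha
    obtain ⟨j, rfl⟩ := hb
    have : i ≠ j := fun h => hab (by rw [h])
    exact this
  · intro t ht hsub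
    apply Finset.Subset.antisymm hsub
    intro x hx
    have hmem : (x.1, f x.1) ∈ t := hsub (by simp [transClique])
    by_cases hx2 : x = (x.1, f x.1)
    · rw [hx2]; simp [transClique]
    · exact absurd (ht hx hmem hx2) (by simp [completeMultipartite3])

lemma maxClique_eq_trans (m : ℕ) (K : Finset (Fin m × Fin 3))
    (hK : IsMaxClique (completeMultipartite3 m) K) :
    ∃ f : Fin m → Fin 3, K = transClique m f := by
  have hex : ∀ i : Fin m, ∃ x ∈ K, x.1 = i := by
    intro i
    by_contra hc
    push_neg at hc
    have hcl : (completeMultipartite3 m).IsClique ↑(insert (⟨i, 0⟩ : Fin m × Fin 3) K) := by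
      intro a ha b hb hab
      simp only [Finset.coe_insert, Set.mem_insert_iff] at ha hb
      rcases ha with rfl | ha <;> rcases hb with rfl | hb
      · exact absurd rfl hab
      · exact fun h => hc b hb h.symm
      · exact fun h => hc a ha h
      · exact hK.1 ha hb hab
    have := hK.2 _ hcl (Finset.subset_insert _ _)
    have hmem : (⟨i, 0⟩ : Fin m × Fin 3) ∈ K := this ▸ Finset.mem_insert_self _ _
    exact hc _ hmem rfl
  choose g hgK hg1 using hex
  refine ⟨fun i => (g i).2, ?_⟩
  have hg : ∀ i, g i = (i, (g i).2) := fun i => Prod.ext (hg1 i) rfl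
  apply Finset.Subset.antisymm
  · intro x hx
    simp only [transClique, Finset.mem_image, Finset.mem_univ, true_and]
    refine ⟨x.1, ?_⟩
    have hmem : g x.1 ∈ K := hgK x.1
    by_cases hx2 : x = g x.1
    · exact (hg x.1).symm.trans hx2.symm
    · exact absurd (hK.1 hmem hx (fun h => hx2 h.symm)) (by simp [completeMultipartite3, hg1])
  · intro x hx
    simp only [transClique, Finset.mem_image, Finset.mem_univ, true_and] at hx
    obtain ⟨i, rfl⟩ := hx
    rw [← hg i]; exact hgK i

theorem stmt18 (m : ℕ) (hm : 1 ≤ m) :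
    IsCClosed (completeMultipartite3 m) (3 * m - 2) ∧
    ¬ IsCClosed (completeMultipartite3 m) (3 * m - 3) ∧
    {K : Finset (Fin m × Fin 3) | IsMaxClique (completeMultipartite3 m) K}.ncard
      = 3 ^ m := by
  refine ⟨?_, ?_, ?_⟩
  · intro u v huv hadj
    have h1 : u.1 = v.1 := by
      by_contra h; exact hadj h
    rw [cn_card m u v h1]
    omega
  · intro h
    have := h (⟨0, hm⟩, 0) (⟨0, hm⟩, 1)
      (by
        intro hc
        have h2 : (0 : Fin 3) = 1 := congrArg Prod.snd hc
        exact absurd h2 (by decide))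
      (by simp [completeMultipartite3])
    rw [cn_card m (⟨0, hm⟩, 0) (⟨0, hm⟩, 1) rfl] at this
    omega
  · have heq : {K : Finset (Fin m × Fin 3) | IsMaxClique (completeMultipartite3 m) K}
        = Set.range (transClique m) := by
      ext K
      constructor
      · intro hK
        obtain ⟨f, hf⟩ := maxClique_eq_trans m K hK
        exact ⟨f, hf.symm⟩
      · rintro ⟨f, rfl⟩
        exact transClique_isMaxClique m f
    rw [heq]
    have hinj : Function.Injective (transClique m) := by
      intro f g hfg
      funext i
      have : (i, f i) ∈ transClique m g := hfg ▸ (by simp [transClique])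
      simp only [transClique, Finset.mem_image, Finset.mem_univ, true_and] at this
      obtain ⟨j, hj⟩ := this
      have : j = i := congrArg Prod.fst hj
      subst this
      exact (congrArg Prod.snd hj).symm
    rw [← Nat.card_coe_set_eq, Nat.card_range_of_injective hinj]
    simp [Nat.card_eq_fintype_card]
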